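/- Let (E, I) be a matroid k-parity constraint given by a matroid M on vertices V and disjoint edges E of size at most k, and let A, B ∈ I be disjoint feasible sets. Then there exists a collection of sets {N_b ⊆ A : b ∈ B} such that: (1) A ∪ {b ∈ B : N_b = ∅} ∈ I; (2) for every a ∈ A, (A \ {a}) ∪ {b ∈ B : N_b = {a}} ∈ I; and (3) for every a ∈ A, |{b ∈ B : a ∈ N_b}| ≤ k. -/

import Mathlib

open Set
namespace KParityProof
variable {V : Type*} {M : Matroid V} {I X Y S C C₁ C₂ D Z : Set V} {s : V}

noncomputable def rk (M : Matroid V) (X : Set V) : ℕ := (M.exists_isBasis' X).choose.ncard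
lemma exists_basis'_rk (M : Matroid V) (X : Set V) : ∃ I, M.IsBasis' I X ∧ I.ncard = rk M X :=
  ⟨_, (M.exists_isBasis' X).choose_spec, rfl⟩
lemma Basis'_ncard (h : M.IsBasis' I X) : I.ncard = rk M X := by
  obtain ⟨J, hJ, hJc⟩ := exists_basis'_rk M X
  rw [← hJc]; have := h.encard_eq_encard hJ; simp [Set.ncard, this]
lemma indep_finite (hfin : M.E.Finite) (h : M.Indep I) : I.Finite := hfin.subset h.subset_ground
lemma rk_indep (h : M.Indep I) : rk M I = I.ncard := (Basis'_ncard (h.isBasis_self.isBasis')).symm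
lemma ncard_le_rk (hfin : M.E.Finite) (h : M.Indep I) (hIX : I ⊆ X) : I.ncard ≤ rk M X := by
  obtain ⟨J, hJ, hIJ⟩ := h.subset_isBasis'_of_subset hIX
  rw [← Basis'_ncard hJ]; exact ncard_le_ncard hIJ (indep_finite hfin hJ.indep)
lemma rk_mono (hfin : M.E.Finite) (hXY : X ⊆ Y) : rk M X ≤ rk M Y := by
  obtain ⟨J, hJ, hJc⟩ := exists_basis'_rk M X
  rw [← hJc]; exact ncard_le_rk hfin hJ.indep (hJ.subset.trans hXY)
lemma rk_insert_le (hfin : M.E.Finite) (x : V) (X : Set V) : rk M (insert x X) ≤ rk M X + 1 := by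
  obtain ⟨J, hJ, hJc⟩ := exists_basis'_rk M (insert x X)
  rw [← hJc]
  have h1 : J \ {x} ⊆ X := by
    intro y hy; rcases hJ.subset hy.1 with h | h
    · exact absurd h hy.2
    · exact h
  have h2 : (J \ {x}).ncard ≤ rk M X := ncard_le_rk hfin (hJ.indep.subset diff_subset) h1
  have h3 : J.ncard ≤ (J \ {x}).ncard + 1 := by
    by_cases hx : x ∈ J
    · rw [ncard_diff_singleton_add_one hx (indep_finite hfin hJ.indep)]
    · rw [diff_singleton_eq_self hx]; omega
  omega
lemma rk_submod (hfin : M.E.Finite) (X Y : Set V) :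
    rk M (X ∪ Y) + rk M (X ∩ Y) ≤ rk M X + rk M Y := by
  obtain ⟨I₀, hI₀⟩ := M.exists_isBasis' (X ∩ Y)
  obtain ⟨J, hJ, hIJ⟩ := hI₀.indep.subset_isBasis'_of_subset
    (hI₀.subset.trans inter_subset_left |>.trans subset_union_left)
  have hJfin : J.Finite := indep_finite hfin hJ.indep
  have hJXfin : (J ∩ X).Finite := hJfin.subset inter_subset_left
  have hJYfin : (J ∩ Y).Finite := hJfin.subset inter_subset_left
  have hJeq : (J ∩ X) ∪ (J ∩ Y) = J := by
    rw [← inter_union_distrib_left]; exact inter_eq_self_of_subset_left hJ.subset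
  have hcard : (J ∩ X).ncard + (J ∩ Y).ncard = J.ncard + (J ∩ (X ∩ Y)).ncard := by
    have := ncard_union_add_ncard_inter (J ∩ X) (J ∩ Y) hJXfin hJYfin
    rw [hJeq] at this
    rw [← this]; congr 2
    ext z; simp; tauto
  have hJI : J ∩ (X ∩ Y) = I₀ :=
    (hI₀.eq_of_subset_indep (hJ.indep.subset inter_subset_left)
      (subset_inter hIJ hI₀.subset) inter_subset_right).symm
  have h1 : (J ∩ X).ncard ≤ rk M X :=
    ncard_le_rk hfin (hJ.indep.subset inter_subset_left) inter_subset_right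
  have h2 : (J ∩ Y).ncard ≤ rk M Y :=
    ncard_le_rk hfin (hJ.indep.subset inter_subset_left) inter_subset_right
  have h3 := Basis'_ncard hJ
  have h4 := Basis'_ncard hI₀
  rw [hJI] at hcard
  omega

lemma rk_not_indep_singleton (hC : M.Indep C) (h : ¬ M.Indep (C ∪ {s})) :
    rk M (C ∪ {s}) = C.ncard := by
  obtain ⟨J, hJ, hCJ⟩ := hC.subset_isBasis'_of_subset (subset_union_left : C ⊆ C ∪ {s})
  have hJC : J = C := by
    by_contra hne
    have hsJ : s ∈ J := by
      by_contra hsJ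
      exact hne (subset_antisymm (fun y hy => (hJ.subset hy).elim id
        (by rintro rfl; exact absurd hy hsJ)) hCJ)
    exact h (hJ.indep.subset (by
      rw [subset_antisymm hJ.subset (union_subset hCJ (singleton_subset_iff.mpr hsJ))]))
  rw [← Basis'_ncard hJ, hJC]

lemma indep_singleton_of_rk (hfin : M.E.Finite) (hC : M.Indep C)
    (h : C.ncard + 1 ≤ rk M (C ∪ {s})) : M.Indep (C ∪ {s}) := by
  by_contra hcon
  rw [rk_not_indep_singleton hC hcon] at h
  omega

lemma rk_indep_singleton (hfin : M.E.Finite) (hC : M.Indep C) (hs : s ∉ C)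
    (h : M.Indep (C ∪ {s})) : rk M (C ∪ {s}) = rk M C + 1 := by
  rw [rk_indep h, rk_indep hC, union_singleton, ncard_insert_of_notMem hs (indep_finite hfin hC)]

/-- The key step for the 2-matroid-union lemma: in the absence of tight sets,
an element `s` with `C₁ ∪ {s}` independent can be committed to side 1. -/
lemma two_union_step (hfin : M.E.Finite) {n : ℕ}
    (ih : ∀ m, m < n → ∀ S C₁ C₂ : Set V, S.ncard = m → S ⊆ M.E → Disjoint S C₁ →
      Disjoint S C₂ → M.Indep C₁ → M.Indep C₂ →
      (∀ S' ⊆ S, S'.ncard + rk M C₁ + rk M C₂ ≤ rk M (C₁ ∪ S') + rk M (C₂ ∪ S')) →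
      ∃ P ⊆ S, M.Indep (C₁ ∪ P) ∧ M.Indep (C₂ ∪ (S \ P)))
    {S C₁ C₂ : Set V} (hcard : S.ncard = n) (hSE : S ⊆ M.E) (hd1 : Disjoint S C₁)
    (hd2 : Disjoint S C₂) (hC₁ : M.Indep C₁) (hC₂ : M.Indep C₂)
    (hall : ∀ S' ⊆ S, S'.ncard + rk M C₁ + rk M C₂ ≤ rk M (C₁ ∪ S') + rk M (C₂ ∪ S'))
    (hnt : ∀ Z ⊆ S, Z.Nonempty → Z ≠ S →
      Z.ncard + rk M C₁ + rk M C₂ + 1 ≤ rk M (C₁ ∪ Z) + rk M (C₂ ∪ Z))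
    {s : V} (hs : s ∈ S) (hn2 : 2 ≤ n) (hind : M.Indep (C₁ ∪ {s})) :
    ∃ P ⊆ S, M.Indep (C₁ ∪ P) ∧ M.Indep (C₂ ∪ (S \ P)) := by
  have SFin : S.Finite := hfin.subset hSE
  have hsC₁ : s ∉ C₁ := disjoint_left.mp hd1 hs
  have rk1s : rk M (C₁ ∪ {s}) = rk M C₁ + 1 := rk_indep_singleton hfin hC₁ hsC₁ hind
  have newHall : ∀ Z ⊆ S \ {s}, Z.ncard + rk M (C₁ ∪ {s}) + rk M C₂ ≤
      rk M ((C₁ ∪ {s}) ∪ Z) + rk M (C₂ ∪ Z) := by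
    intro Z hZ
    have hZS : Z ⊆ S := hZ.trans diff_subset
    have hsZ : s ∉ Z := fun h => (hZ h).2 rfl
    have hZfin : Z.Finite := SFin.subset hZS
    have hcupZ : (C₁ ∪ {s}) ∪ Z = C₁ ∪ (Z ∪ {s}) := by
      ext x; simp only [mem_union, mem_singleton_iff]; tauto
    have hZs_sub : Z ∪ {s} ⊆ S := union_subset hZS (singleton_subset_iff.mpr hs)
    have hZscard : (Z ∪ {s}).ncard = Z.ncard + 1 := by
      rw [union_singleton, ncard_insert_of_notMem hsZ hZfin]
    have hins2 : rk M (C₂ ∪ (Z ∪ {s})) ≤ rk M (C₂ ∪ Z) + 1 := by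
      rw [show C₂ ∪ (Z ∪ {s}) = insert s (C₂ ∪ Z) by
        ext x; simp only [mem_union, mem_insert_iff, mem_singleton_iff]; tauto]
      exact rk_insert_le hfin s (C₂ ∪ Z)
    by_cases hZeq : Z ∪ {s} = S
    · by_contra hcon
      push_neg at hcon
      have hallS := hall S subset_rfl
      have hC₂S : rk M (C₂ ∪ S) ≤ rk M (C₂ ∪ Z) + 1 := by rw [← hZeq]; exact hins2
      have hmono : rk M (C₁ ∪ Z) ≤ rk M (C₁ ∪ S) :=
        rk_mono hfin (union_subset_union_right _ hZS)
      have hZnonempty : Z.Nonempty := by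
        rw [← ncard_pos hZfin]
        have : S.ncard = Z.ncard + 1 := by rw [← hZeq]; exact hZscard
        omega
      have hZneS : Z ≠ S := fun h => hsZ (h ▸ hs)
      have hnt' := hnt Z hZS hZnonempty hZneS
      rw [hcupZ, hZeq] at hcon
      have hScard : S.ncard = Z.ncard + 1 := by rw [← hZeq]; exact hZscard
      omega
    · have hnt' := hnt (Z ∪ {s}) hZs_sub ⟨s, by simp⟩ hZeq
      rw [hcupZ]
      have hmono1 : rk M (C₁ ∪ (Z ∪ {s})) ≤ rk M (C₁ ∪ Z) + 1 := by
        rw [show C₁ ∪ (Z ∪ {s}) = insert s (C₁ ∪ Z) by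
          ext x; simp only [mem_union, mem_insert_iff, mem_singleton_iff]; tauto]
        exact rk_insert_le hfin s (C₁ ∪ Z)
      have hmono2 : rk M (C₁ ∪ Z) ≤ rk M (C₁ ∪ (Z ∪ {s})) :=
        rk_mono hfin (union_subset_union_right _ subset_union_left)
      omega
  have hcard' : (S \ {s}).ncard = n - 1 := by
    rw [ncard_diff_singleton_of_mem hs, hcard]
  obtain ⟨P', hP'sub, h1, h2⟩ := ih (n - 1) (by omega) (S \ {s}) (C₁ ∪ {s}) C₂ hcard'
    (diff_subset.trans hSE)
    (disjoint_union_right.mpr ⟨hd1.mono_left diff_subset, by simp⟩)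
    (hd2.mono_left diff_subset) hind hC₂ newHall
  refine ⟨insert s P', insert_subset hs (hP'sub.trans diff_subset), ?_, ?_⟩
  · rw [show C₁ ∪ insert s P' = (C₁ ∪ {s}) ∪ P' by
      ext x; simp only [mem_union, mem_insert_iff, mem_singleton_iff]; tauto]
    exact h1
  · rw [show S \ insert s P' = (S \ {s}) \ P' by
      ext x; simp only [mem_diff, mem_insert_iff, mem_singleton_iff]; tauto]
    exact h2

/-- Union theorem for two "contracted" matroids, Hall-type sufficient condition. -/
lemma two_union (hfin : M.E.Finite) : ∀ n (S C₁ C₂ : Set V), S.ncard = n → S ⊆ M.E →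
    Disjoint S C₁ → Disjoint S C₂ → M.Indep C₁ → M.Indep C₂ →
    (∀ S' ⊆ S, S'.ncard + rk M C₁ + rk M C₂ ≤ rk M (C₁ ∪ S') + rk M (C₂ ∪ S')) →
    ∃ P ⊆ S, M.Indep (C₁ ∪ P) ∧ M.Indep (C₂ ∪ (S \ P)) := by
  intro n
  induction n using Nat.strong_induction_on with
  | _ n ih =>
  intro S C₁ C₂ hcard hSE hd1 hd2 hC₁ hC₂ hall
  have SFin : S.Finite := hfin.subset hSE
  rcases eq_empty_or_nonempty S with rfl | hSne
  · exact ⟨∅, by simp, by simpa, by simpa⟩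
  by_cases htight : ∃ Z, Z ⊆ S ∧ Z.Nonempty ∧ Z ≠ S ∧
      rk M (C₁ ∪ Z) + rk M (C₂ ∪ Z) ≤ Z.ncard + rk M C₁ + rk M C₂
  · obtain ⟨Z, hZS, hZne, hZneS, hZt⟩ := htight
    have hZfin := SFin.subset hZS
    have hZcard_lt : Z.ncard < n := by
      rw [← hcard]; exact ncard_lt_ncard (ssubset_of_subset_of_ne hZS hZneS) SFin
    obtain ⟨P₁, hP₁Z, hi1, hi2⟩ := ih _ hZcard_lt Z C₁ C₂ rfl (hZS.trans hSE)
      (hd1.mono_left hZS) (hd2.mono_left hZS) hC₁ hC₂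
      (fun S' hS' => hall S' (hS'.trans hZS))
    set Q₁ := Z \ P₁ with hQ₁def
    have hQ₁Z : Q₁ ⊆ Z := diff_subset
    have hSZlt : (S \ Z).ncard < n := by
      rw [← hcard, ncard_diff hZS hZfin]
      have : 0 < Z.ncard := (ncard_pos hZfin).mpr hZne
      have : Z.ncard ≤ S.ncard := ncard_le_ncard hZS SFin
      omega
    have hd1' : Disjoint (S \ Z) (C₁ ∪ P₁) := disjoint_union_right.mpr
      ⟨hd1.mono_left diff_subset, disjoint_sdiff_left.mono_right hP₁Z⟩
    have hd2' : Disjoint (S \ Z) (C₂ ∪ Q₁) := disjoint_union_right.mpr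
      ⟨hd2.mono_left diff_subset, disjoint_sdiff_left.mono_right hQ₁Z⟩
    have newHall : ∀ W ⊆ S \ Z, W.ncard + rk M (C₁ ∪ P₁) + rk M (C₂ ∪ Q₁) ≤
        rk M ((C₁ ∪ P₁) ∪ W) + rk M ((C₂ ∪ Q₁) ∪ W) := by
      intro W hW
      have hWS : W ⊆ S := hW.trans diff_subset
      have hWZ : ∀ x ∈ W, x ∉ Z := fun x hx => (hW hx).2
      have hWC₁ : ∀ x ∈ W, x ∉ C₁ := fun x hx => disjoint_left.mp hd1 (hWS hx)
      have hWC₂ : ∀ x ∈ W, x ∉ C₂ := fun x hx => disjoint_left.mp hd2 (hWS hx)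
      have e1 : ((C₁ ∪ P₁) ∪ W) ∪ (C₁ ∪ Z) = C₁ ∪ (Z ∪ W) := by
        ext x
        simp only [mem_union]
        constructor
        · rintro (((h|h)|h)|(h|h)) <;> tauto
        · rintro (h | (h|h))
          · tauto
          · tauto
          · tauto
      have e2 : ((C₁ ∪ P₁) ∪ W) ∩ (C₁ ∪ Z) = C₁ ∪ P₁ := by
        ext x
        simp only [mem_inter_iff, mem_union]
        constructor
        · rintro ⟨(h1|h1), h2⟩
          · exact h1
          · rcases h2 with h2 | h2
            · exact absurd h2 (hWC₁ x h1)
            · exact absurd h2 (hWZ x h1)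
        · intro h; exact ⟨Or.inl h, h.imp id (fun hx => hP₁Z hx)⟩
      have e3 : ((C₂ ∪ Q₁) ∪ W) ∪ (C₂ ∪ Z) = C₂ ∪ (Z ∪ W) := by
        ext x
        simp only [mem_union]
        constructor
        · rintro (((h|h)|h)|(h|h)) <;> first | tauto | exact Or.inr (Or.inl (hQ₁Z h))
        · rintro (h | (h|h)) <;> tauto
      have e4 : ((C₂ ∪ Q₁) ∪ W) ∩ (C₂ ∪ Z) = C₂ ∪ Q₁ := by
        ext x
        simp only [mem_inter_iff, mem_union]
        constructor
        · rintro ⟨(h1|h1), h2⟩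
          · exact h1
          · rcases h2 with h2 | h2
            · exact absurd h2 (hWC₂ x h1)
            · exact absurd h2 (hWZ x h1)
        · intro h; exact ⟨Or.inl h, h.imp id (fun hx => hQ₁Z hx)⟩
      have s1 := rk_submod hfin ((C₁ ∪ P₁) ∪ W) (C₁ ∪ Z)
      rw [e1, e2] at s1
      have s2 := rk_submod hfin ((C₂ ∪ Q₁) ∪ W) (C₂ ∪ Z)
      rw [e3, e4] at s2
      have hdZW : Disjoint Z W := disjoint_left.mpr (fun x hxZ hxW => hWZ x hxW hxZ)
      have hZWcard : (Z ∪ W).ncard = Z.ncard + W.ncard :=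
        ncard_union_eq hdZW hZfin (SFin.subset hWS)
      have hallZW := hall (Z ∪ W) (union_subset hZS hWS)
      omega
    obtain ⟨P₂, hP₂sub, hj1, hj2⟩ := ih _ hSZlt (S \ Z) (C₁ ∪ P₁) (C₂ ∪ Q₁) rfl
      (diff_subset.trans hSE) hd1' hd2' hi1 hi2 newHall
    refine ⟨P₁ ∪ P₂, union_subset (hP₁Z.trans hZS) (hP₂sub.trans diff_subset), ?_, ?_⟩
    · rw [show C₁ ∪ (P₁ ∪ P₂) = ((C₁ ∪ P₁) ∪ P₂) by rw [union_assoc]]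
      exact hj1
    · have e5 : S \ (P₁ ∪ P₂) = Q₁ ∪ ((S \ Z) \ P₂) := by
        ext x
        simp only [mem_diff, mem_union, hQ₁def]
        constructor
        · rintro ⟨hxS, hx⟩
          push_neg at hx
          by_cases hxZ : x ∈ Z
          · exact Or.inl ⟨hxZ, hx.1⟩
          · exact Or.inr ⟨⟨hxS, hxZ⟩, hx.2⟩
        · rintro (⟨hxZ, hxP₁⟩ | ⟨⟨hxS, hxZ⟩, hxP₂⟩)
          · exact ⟨hZS hxZ, by
              push_neg
              exact ⟨hxP₁, fun h => (hP₂sub h).2 hxZ⟩⟩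
          · exact ⟨hxS, by push_neg; exact ⟨fun h => hxZ (hP₁Z h), hxP₂⟩⟩
      rw [e5, show C₂ ∪ (Q₁ ∪ ((S \ Z) \ P₂)) = (C₂ ∪ Q₁) ∪ ((S \ Z) \ P₂) by
        rw [union_assoc]]
      exact hj2
  · push_neg at htight
    have hnt : ∀ Z ⊆ S, Z.Nonempty → Z ≠ S →
        Z.ncard + rk M C₁ + rk M C₂ + 1 ≤ rk M (C₁ ∪ Z) + rk M (C₂ ∪ Z) := by
      intro Z h1 h2 h3
      have := htight Z h1 h2 h3
      omega
    obtain ⟨s, hs⟩ := hSne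
    have hsE : s ∈ M.E := hSE hs
    have hsC₁ : s ∉ C₁ := disjoint_left.mp hd1 hs
    have hsC₂ : s ∉ C₂ := disjoint_left.mp hd2 hs
    have hall_s := hall {s} (singleton_subset_iff.mpr hs)
    rw [ncard_singleton] at hall_s
    by_cases hn1 : n = 1
    · obtain ⟨a, ha⟩ := ncard_eq_one.mp (show S.ncard = 1 by rw [hcard, hn1])
      subst ha
      simp only [mem_singleton_iff] at hs
      subst hs
      by_cases hi : M.Indep (C₁ ∪ {s})
      · exact ⟨{s}, subset_rfl, hi, by simpa⟩
      · have h1 : rk M (C₁ ∪ {s}) = rk M C₁ := by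
          rw [rk_not_indep_singleton hC₁ hi, rk_indep hC₁]
        have h2 : M.Indep (C₂ ∪ {s}) := by
          apply indep_singleton_of_rk hfin hC₂
          rw [← rk_indep hC₂] at *
          omega
        exact ⟨∅, empty_subset _, by simpa, by simpa using h2⟩
    · have hn2 : 2 ≤ n := by
        have : 0 < n := hcard ▸ (ncard_pos SFin).mpr ⟨s, hs⟩
        omega
      by_cases hi : M.Indep (C₁ ∪ {s})
      · exact two_union_step hfin ih hcard hSE hd1 hd2 hC₁ hC₂ hall hnt hs hn2 hi
      · have h1 : rk M (C₁ ∪ {s}) = rk M C₁ := by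
          rw [rk_not_indep_singleton hC₁ hi, rk_indep hC₁]
        have h2 : M.Indep (C₂ ∪ {s}) := by
          apply indep_singleton_of_rk hfin hC₂
          rw [← rk_indep hC₂] at *
          omega
        obtain ⟨P, hPS, hj1, hj2⟩ := two_union_step hfin ih hcard hSE hd2 hd1 hC₂ hC₁
          (fun S' hS' => by have := hall S' hS'; omega)
          (fun Z h1 h2 h3 => by have := hnt Z h1 h2 h3; omega) hs hn2 h2
        refine ⟨S \ P, diff_subset, hj2, ?_⟩
        rw [diff_diff_cancel_left hPS]
        exact hj1

lemma split (hfin : M.E.Finite) (hD : M.Indep D) (hX : X ⊆ D) (hY : Y ⊆ D)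
    (hXY : Disjoint X Y) (hSE : S ⊆ M.E) (hSD : Disjoint S D)
    (hST : M.Indep (S ∪ (D \ (X ∪ Y)))) :
    ∃ P ⊆ S, M.Indep ((D \ X) ∪ P) ∧ M.Indep ((D \ Y) ∪ (S \ P)) := by
  apply two_union hfin S.ncard S (D \ X) (D \ Y) rfl hSE
    (hSD.mono_right diff_subset) (hSD.mono_right diff_subset)
    (hD.subset diff_subset) (hD.subset diff_subset)
  intro S' hS'
  have hDfin := indep_finite hfin hD
  have hS'fin : S'.Finite := (hfin.subset hSE).subset hS'
  have hXYD : ∀ x ∈ D, x ∉ X ∨ x ∉ Y := fun x _ => by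
    by_contra h
    push_neg at h
    exact (disjoint_left.mp hXY h.1) h.2
  have e2 : ((D \ X) ∪ S') ∩ ((D \ Y) ∪ S') = (D \ (X ∪ Y)) ∪ S' := by
    ext x
    simp only [mem_inter_iff, mem_union, mem_diff]
    tauto
  have e3 : ((D \ X) ∪ S') ∪ ((D \ Y) ∪ S') = D ∪ S' := by
    ext x
    simp only [mem_union, mem_diff]
    constructor
    · tauto
    · rintro (h | h)
      · rcases hXYD x h with h' | h' <;> tauto
      · tauto
  have s1 := rk_submod hfin ((D \ X) ∪ S') ((D \ Y) ∪ S')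
  rw [e3, e2] at s1
  have hS'disj : Disjoint S' (D \ (X ∪ Y)) := hSD.mono hS' diff_subset
  have r1 : rk M ((D \ (X ∪ Y)) ∪ S') = (D \ (X ∪ Y)).ncard + S'.ncard := by
    have hind : M.Indep ((D \ (X ∪ Y)) ∪ S') :=
      hST.subset (union_subset (subset_union_right)
        (hS'.trans subset_union_left))
    rw [rk_indep hind, ncard_union_eq hS'disj.symm (hDfin.subset diff_subset) hS'fin]
  have r2 : D.ncard ≤ rk M (D ∪ S') := ncard_le_rk hfin hD subset_union_left
  have r3 : rk M (D \ X) = (D \ X).ncard := rk_indep (hD.subset diff_subset)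
  have r4 : rk M (D \ Y) = (D \ Y).ncard := rk_indep (hD.subset diff_subset)
  have hXfin : X.Finite := hDfin.subset hX
  have hYfin : Y.Finite := hDfin.subset hY
  have c1 : (D \ X).ncard = D.ncard - X.ncard := ncard_diff hX hXfin
  have c2 : (D \ Y).ncard = D.ncard - Y.ncard := ncard_diff hY hYfin
  have c3 : (D \ (X ∪ Y)).ncard = D.ncard - (X.ncard + Y.ncard) := by
    rw [ncard_diff (union_subset hX hY) (hXfin.union hYfin),
      ncard_union_eq hXY hXfin hYfin]
  have c4 : X.ncard ≤ D.ncard := ncard_le_ncard hX hDfin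
  have c5 : Y.ncard ≤ D.ncard := ncard_le_ncard hY hDfin
  have c6 : X.ncard + Y.ncard ≤ D.ncard := by
    rw [← ncard_union_eq hXY hXfin hYfin]
    exact ncard_le_ncard (union_subset hX hY) hDfin
  omega

lemma card_le_of_indep_subset_closure (hfin : M.E.Finite) {K : Set V} (hK : M.Indep K)
    (hKD : K ⊆ M.closure D) (hD : M.Indep D) : K.ncard ≤ D.ncard := by
  obtain ⟨K', hK', hKK'⟩ := hK.subset_isBasis_of_subset hKD (M.closure_subset_ground D)
  have h1 : K'.encard = D.encard := hK'.encard_eq_encard hD.isBasis_closure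
  have h2 : K'.ncard = D.ncard := by simp [Set.ncard, h1]
  rw [← h2]
  exact ncard_le_ncard hKK' (indep_finite hfin hK'.indep)

lemma cover (hfin : M.E.Finite) (hD : M.Indep D) :
    ∀ n (𝒜 : Set (Set V)) (S : Set V), 𝒜.Finite → 𝒜.ncard = n → (∀ a ∈ 𝒜, a ⊆ D) →
    𝒜.Pairwise Disjoint → S ⊆ M.closure D → Disjoint S D → M.Indep (S ∪ (D \ ⋃₀ 𝒜)) →
    ∃ R : Set V → Set V, (∀ a ∈ 𝒜, R a ⊆ S ∧ M.Indep ((D \ a) ∪ R a)) ∧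
      (∀ x ∈ S, ∃ a ∈ 𝒜, x ∈ R a) := by
  intro n
  induction n using Nat.strong_induction_on with
  | _ n ih =>
  intro 𝒜 S h𝒜fin h𝒜card h𝒜D h𝒜p hScl hSD hST
  classical
  rcases eq_empty_or_nonempty 𝒜 with rfl | ⟨a₀, ha₀⟩
  · have hSempty : S = ∅ := by
      by_contra hne
      obtain ⟨x, hx⟩ := nonempty_iff_ne_empty.mpr hne
      have hxD : x ∉ D := disjoint_left.mp hSD hx
      have hxind : M.Indep (insert x D) := hST.subset (by
        rw [sUnion_empty, diff_empty]
        exact insert_subset (Or.inl hx) subset_union_right)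
      exact (hD.notMem_closure_iff_of_notMem hxD).mpr hxind (hScl hx)
    subst hSempty
    exact ⟨fun _ => ∅, by simp, by simp⟩
  · have ha₀D : a₀ ⊆ D := h𝒜D a₀ ha₀
    set 𝒜₀ := 𝒜 \ {a₀} with h𝒜₀def
    set Y := ⋃₀ 𝒜₀ with hYdef
    have hYD : Y ⊆ D := sUnion_subset (fun a ha => h𝒜D a ha.1)
    have hXY : Disjoint a₀ Y := disjoint_sUnion_right.mpr
      (fun a ha => h𝒜p ha₀ ha.1 (fun h => ha.2 h.symm))
    have hU : a₀ ∪ Y = ⋃₀ 𝒜 := by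
      rw [hYdef, ← sUnion_insert, insert_diff_singleton, insert_eq_self.mpr ha₀]
    have hSE : S ⊆ M.E := hScl.trans (M.closure_subset_ground D)
    obtain ⟨P, hPS, h1, h2⟩ := split hfin hD ha₀D hYD hXY hSE hSD (by rwa [hU])
    have h𝒜₀card : 𝒜₀.ncard < n := by
      rw [← h𝒜card, h𝒜₀def, ncard_diff (singleton_subset_iff.mpr ha₀) (finite_singleton a₀)]
      have : 0 < 𝒜.ncard := (ncard_pos h𝒜fin).mpr ⟨a₀, ha₀⟩
      simp only [ncard_singleton]
      omega
    obtain ⟨R₀, hR₀, hcov₀⟩ := ih _ h𝒜₀card 𝒜₀ (S \ P) (h𝒜fin.subset diff_subset) rfl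
      (fun a ha => h𝒜D a ha.1) (h𝒜p.mono diff_subset)
      ((diff_subset).trans hScl) (hSD.mono_left diff_subset)
      (by rwa [union_comm])
    refine ⟨fun a => if a = a₀ then P else R₀ a, ?_, ?_⟩
    · intro a ha
      by_cases haa : a = a₀
      · subst haa
        simp only [if_pos rfl]
        exact ⟨hPS, h1⟩
      · simp only [if_neg haa]
        exact ⟨(hR₀ a ⟨ha, haa⟩).1.trans diff_subset, (hR₀ a ⟨ha, haa⟩).2⟩
    · intro x hx
      by_cases hxP : x ∈ P
      · exact ⟨a₀, ha₀, by simp only [if_pos rfl]; exact hxP⟩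
      · obtain ⟨a, ha, hxa⟩ := hcov₀ x ⟨hx, hxP⟩
        exact ⟨a, ha.1, by simp only [if_neg (show a ≠ a₀ from fun h => ha.2 (by simp [h]))]; exact hxa⟩

end KParityProof

/-- exchange lemma for matroid `k`-parity constraints (disjoint case). -/
theorem matroid_k_parity_exchange {V : Type*} (M : Matroid V) (hfin : M.E.Finite)
    (k : ℕ) (E : Set (Set V))
    (hdisj : E.Pairwise Disjoint)
    (hcard : ∀ e ∈ E, e.ncard ≤ k)
    (A B : Set (Set V)) (hAE : A ⊆ E) (hBE : B ⊆ E)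
    (hA : M.Indep (⋃₀ A)) (hB : M.Indep (⋃₀ B)) (hAB : Disjoint A B) :
    ∃ N : Set V → Set (Set V),
      (∀ b ∈ B, N b ⊆ A) ∧
      M.Indep (⋃₀ (A ∪ {b ∈ B | N b = ∅})) ∧
      (∀ a ∈ A, M.Indep (⋃₀ ((A \ {a}) ∪ {b ∈ B | N b = {a}}))) ∧
      (∀ a ∈ A, {b ∈ B | a ∈ N b}.ncard ≤ k) := by
  classical
  open KParityProof in
  set I := ⋃₀ A with hIdef
  set J := ⋃₀ B with hJdef
  have hIE : I ⊆ M.E := hA.subset_ground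
  have hJE : J ⊆ M.E := hB.subset_ground
  have hABdisj : ∀ a ∈ A, ∀ b ∈ B, Disjoint a b := by
    intro a ha b hb
    have hne : a ≠ b := fun h => disjoint_left.mp hAB ha (h ▸ hb)
    exact hdisj (hAE ha) (hBE hb) hne
  have hIJ : Disjoint I J := by
    rw [hIdef, disjoint_sUnion_left]
    intro a ha
    rw [hJdef, disjoint_sUnion_right]
    intro b hb
    exact hABdisj a ha b hb
  obtain ⟨D, hD, hID⟩ := hA.subset_isBasis_of_subset
    (subset_union_left : I ⊆ I ∪ J) (union_subset hIE hJE)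
  have hDind := hD.indep
  have hDsub : D ⊆ I ∪ J := hD.subset
  set S := J \ D with hSdef
  have hIfin : I.Finite := hfin.subset hIE
  have hJfin : J.Finite := hfin.subset hJE
  have hAfin : A.Finite := by
    apply Set.Finite.subset hIfin.finite_subsets
    intro a ha
    exact subset_sUnion_of_mem ha
  have hScl : S ⊆ M.closure D := by
    intro x hx
    have : x ∈ M.closure (I ∪ J) :=
      M.subset_closure (I ∪ J) (union_subset hIE hJE) (Or.inr hx.1)
    rwa [← hD.closure_eq_closure] at this
  have hSD : Disjoint S D := disjoint_sdiff_left
  have haD : ∀ a ∈ A, a ⊆ D := fun a ha => (subset_sUnion_of_mem ha).trans hID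
  have hST : M.Indep (S ∪ (D \ ⋃₀ A)) := by
    apply hB.subset
    apply union_subset diff_subset
    intro x hx
    rcases hDsub hx.1 with h | h
    · exact absurd h hx.2
    · exact h
  obtain ⟨R, hR, hcov⟩ := cover hfin hDind A.ncard A S hAfin rfl haD
    (hdisj.mono hAE) hScl hSD hST
  refine ⟨fun b => {a ∈ A | (b ∩ R a).Nonempty}, fun b _ => sep_subset _ _, ?_, ?_, ?_⟩
  · -- condition 1
    apply hDind.subset
    apply sUnion_subset
    rintro t (ht | ⟨htB, htN⟩)
    · exact (subset_sUnion_of_mem ht).trans hID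
    · intro x hx
      have hxJ : x ∈ J := ⟨t, htB, hx⟩
      by_contra hxD
      obtain ⟨a, haA, hxa⟩ := hcov x ⟨hxJ, hxD⟩
      have hmem : a ∈ {a ∈ A | (t ∩ R a).Nonempty} := ⟨haA, ⟨x, hx, hxa⟩⟩
      simp only [] at htN
      rw [htN] at hmem
      exact hmem
  · -- condition 2
    intro a haA
    apply (hR a haA).2.subset
    apply sUnion_subset
    rintro t (⟨htA, hta⟩ | ⟨htB, htN⟩)
    · intro x hx
      refine Or.inl ⟨haD t htA hx, fun hxa => ?_⟩
      have hne : t ≠ a := fun h => hta (mem_singleton_iff.mpr h)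
      exact disjoint_left.mp (hdisj (hAE htA) (hAE haA) hne) hx hxa
    · intro x hx
      by_cases hxS : x ∈ S
      · obtain ⟨a', ha', hxa'⟩ := hcov x hxS
        have hmem : a' ∈ {a'' ∈ A | (t ∩ R a'').Nonempty} := ⟨ha', ⟨x, hx, hxa'⟩⟩
        simp only [] at htN
        rw [htN, mem_singleton_iff] at hmem
        subst hmem
        exact Or.inr hxa'
      · have hxJ : x ∈ J := ⟨t, htB, hx⟩
        have hxD : x ∈ D := by
          by_contra h
          exact hxS ⟨hxJ, h⟩
        refine Or.inl ⟨hxD, fun hxa => ?_⟩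
        exact disjoint_left.mp hIJ (subset_sUnion_of_mem haA hxa) hxJ
  · -- condition 3
    intro a haA
    have hRa := hR a haA
    have hRafin : (R a).Finite := hJfin.subset (hRa.1.trans diff_subset)
    have hDfin : D.Finite := indep_finite hfin hDind
    have hafin : a.Finite := hDfin.subset (haD a haA)
    have hkey : (R a).ncard ≤ a.ncard := by
      have hind : M.Indep ((D \ a) ∪ R a) := hRa.2
      have hclsub : (D \ a) ∪ R a ⊆ M.closure D :=
        union_subset (diff_subset.trans (M.subset_closure D hDind.subset_ground))
          (hRa.1.trans hScl)
      have hbound := card_le_of_indep_subset_closure hfin hind hclsub hDind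
      have hdisjRa : Disjoint (D \ a) (R a) :=
        (hSD.mono_left hRa.1).symm.mono_left diff_subset
      rw [ncard_union_eq hdisjRa (hDfin.subset diff_subset) hRafin] at hbound
      have hd : (D \ a).ncard = D.ncard - a.ncard := ncard_diff (haD a haA) hafin
      have hle : a.ncard ≤ D.ncard := ncard_le_ncard (haD a haA) hDfin
      omega
    have hfinal : {b ∈ B | a ∈ {a' ∈ A | (b ∩ R a').Nonempty}}.ncard ≤ (R a).ncard := by
      rcases eq_empty_or_nonempty {b ∈ B | a ∈ {a' ∈ A | (b ∩ R a').Nonempty}} with he | hne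
      · rw [he]; simp
      · obtain ⟨b₀, hb₀⟩ := hne
        haveI : Nonempty V := ⟨hb₀.2.2.choose⟩
        set f : Set V → V :=
          fun b => if h : (b ∩ R a).Nonempty then h.choose else Classical.arbitrary V with hf
        have hmap : ∀ b ∈ {b | b ∈ B ∧ a ∈ {a' | a' ∈ A ∧ (b ∩ R a').Nonempty}},
            f b ∈ R a := by
          intro b hb
          have h := hb.2.2
          simp only [hf]
          rw [dif_pos h]
          exact h.choose_spec.2
        have hinj : InjOn f {b | b ∈ B ∧ a ∈ {a' | a' ∈ A ∧ (b ∩ R a').Nonempty}} := by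
          intro b hb b' hb' heq
          have h := hb.2.2
          have h' := hb'.2.2
          simp only [hf] at heq
          rw [dif_pos h, dif_pos h'] at heq
          by_contra hne'
          have h1 := h.choose_spec.1
          rw [heq] at h1
          exact disjoint_left.mp (hdisj (hBE hb.1) (hBE hb'.1) hne') h1 h'.choose_spec.1
        exact ncard_le_ncard_of_injOn f hmap hinj hRafin
    exact hfinal.trans (hkey.trans (hcard a (hAE haA)))
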